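/- An array A is (1̄,t)-locating if and only if it is (1,t)-locating and t-covering. -/
import Mathlib


/-- Row `r` of array `A` covers interaction `T`. -/
def covers {N k v : ℕ} (A : Fin N → Fin k → Fin v) (r : Fin N)
    (T : Finset (Fin k × Fin v)) : Prop := ∀ p ∈ T, A r p.1 = p.2

/-- `ρ_A(T)`: the set of rows of `A` covering interaction `T`. -/
def rho {N k v : ℕ} (A : Fin N → Fin k → Fin v)
    (T : Finset (Fin k × Fin v)) : Set (Fin N) := {r | covers A r T}

/-- `ρ_A(𝒯)` for a family of interactions. -/
def rhoFam {N k v : ℕ} (A : Fin N → Fin k → Fin v)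
    (𝒯 : Finset (Finset (Fin k × Fin v))) : Set (Fin N) := ⋃ T ∈ 𝒯, rho A T

/-- `T` is an interaction of strength `t`: `t` factor-value pairs with distinct factors. -/
def IsInteraction {k v : ℕ} (t : ℕ) (T : Finset (Fin k × Fin v)) : Prop :=
  T.card = t ∧ ∀ p ∈ T, ∀ q ∈ T, p ≠ q → p.1 ≠ q.1

/-- `A` is `t`-covering. -/
def Covering {N k v : ℕ} (t : ℕ) (A : Fin N → Fin k → Fin v) : Prop :=
  ∀ T : Finset (Fin k × Fin v), IsInteraction t T → (rho A T).Nonempty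

/-- `A` is `(d,t)`-locating. -/
def Locating {N k v : ℕ} (d t : ℕ) (A : Fin N → Fin k → Fin v) : Prop :=
  ∀ 𝒯₁ 𝒯₂ : Finset (Finset (Fin k × Fin v)),
    (∀ T ∈ 𝒯₁, IsInteraction t T) → (∀ T ∈ 𝒯₂, IsInteraction t T) →
    𝒯₁.card = d → 𝒯₂.card = d →
    (rhoFam A 𝒯₁ = rhoFam A 𝒯₂ ↔ 𝒯₁ = 𝒯₂)

/-- `A` is `(d̄,t)`-locating. -/
def LocatingBar {N k v : ℕ} (d t : ℕ) (A : Fin N → Fin k → Fin v) : Prop :=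
  ∀ 𝒯₁ 𝒯₂ : Finset (Finset (Fin k × Fin v)),
    (∀ T ∈ 𝒯₁, IsInteraction t T) → (∀ T ∈ 𝒯₂, IsInteraction t T) →
    𝒯₁.card ≤ d → 𝒯₂.card ≤ d →
    (rhoFam A 𝒯₁ = rhoFam A 𝒯₂ ↔ 𝒯₁ = 𝒯₂)

theorem locatingBar_iff {N k v t : ℕ} (A : Fin N → Fin k → Fin v) :
    LocatingBar 1 t A ↔ Locating 1 t A ∧ Covering t A := by
  constructor
  · intro h
    refine ⟨fun 𝒯₁ 𝒯₂ h1 h2 c1 c2 => h 𝒯₁ 𝒯₂ h1 h2 c1.le c2.le, ?_⟩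
    intro T hT
    by_contra he
    rw [Set.not_nonempty_iff_eq_empty] at he
    have := (h {T} ∅ (by simpa using hT) (by simp) (by simp) (by simp)).mp
      (by simp [rhoFam, he])
    exact Finset.singleton_ne_empty T this
  · rintro ⟨hloc, hcov⟩ 𝒯₁ 𝒯₂ h1 h2 c1 c2
    rcases Nat.le_one_iff_eq_zero_or_eq_one.mp c1 with c1 | c1 <;>
      rcases Nat.le_one_iff_eq_zero_or_eq_one.mp c2 with c2 | c2
    · rw [Finset.card_eq_zero] at c1 c2; simp [c1, c2]
    · rw [Finset.card_eq_zero] at c1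
      obtain ⟨T, rfl⟩ := Finset.card_eq_one.mp c2
      subst c1
      obtain ⟨r, hr⟩ := hcov T (h2 T (by simp))
      constructor
      · intro he
        exfalso
        have : r ∈ rhoFam A (∅ : Finset (Finset (Fin k × Fin v))) := by
          rw [he]; simp [rhoFam]; exact hr
        simpa [rhoFam] using this
      · intro he; exact absurd he.symm (Finset.singleton_ne_empty T)
    · rw [Finset.card_eq_zero] at c2
      obtain ⟨T, rfl⟩ := Finset.card_eq_one.mp c1
      subst c2
      obtain ⟨r, hr⟩ := hcov T (h1 T (by simp))
      constructor
      · intro he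
        exfalso
        have : r ∈ rhoFam A (∅ : Finset (Finset (Fin k × Fin v))) := by
          rw [← he]; simp [rhoFam]; exact hr
        simpa [rhoFam] using this
      · intro he; exact absurd he (Finset.singleton_ne_empty T)
    · exact hloc 𝒯₁ 𝒯₂ h1 h2 c1 c2
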